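/- Let s be the sequence of ten events with timestamps 1, 2, …, 10 and labels a, b, c, b, d, a, c, b, c, d (in this order), and let the window size be ρ = 5. Let G1 be the episode on four nodes, each carrying a single event, labelled a, b, c, d, whose only edge is a proper edge from the a-node to the d-node; let G3 be the transitively closed serial episode on nodes labelled a, b, c, d with proper edges giving the total order a, b, c, d; and let G4 be the transitively closed serial episode on nodes labelled a, b, c, d with proper edges giving the total order a, c, b, d. Then fr(G1; s) = fr(G3; s) = fr(G4; s) = 2, G1 ⪯ G3, G1 ⪯ G4, G3 ⋠ G1, G4 ⋠ G1, G3 ⋠ G4, and G4 ⋠ G3. In particular, an episode may have two incomparable strict superepisodes with the same support, so no frequency-based closure operator exists for episodes. -/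

import Mathlib

/-- A sequence event: a unique id, a label (from alphabet encoded as `ℕ`),
and an integer time stamp. -/
structure SeqEvent where
  id : ℕ
  lab : ℕ
  ts : ℤ
deriving DecidableEq

/-- An event sequence: a finite collection of sequence events with distinct ids,
whose time stamps are monotone in the ids. -/
structure EventSeq where
  events : Finset SeqEvent
  id_inj : ∀ e ∈ events, ∀ f ∈ events, e.id = f.id → e = f
  ts_mono : ∀ e ∈ events, ∀ f ∈ events, e.id ≤ f.id → e.ts ≤ f.ts

/-- An episode: a finite set of episode events (identified by ids in `ℕ`) with labels,
a finite set of graph nodes, a map from events to nodes (surjectivity and the DAG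
property are recorded in `Episode.WellFormed`), and weak and proper edges. -/
structure Episode where
  events : Finset ℕ
  lab : ℕ → ℕ
  nodes : Finset ℕ
  node : ℕ → ℕ
  weak : ℕ → ℕ → Prop
  proper : ℕ → ℕ → Prop

namespace Episode

/-- An edge of the episode graph (weak or proper). -/
def edge (G : Episode) (a b : ℕ) : Prop := G.weak a b ∨ G.proper a b

/-- `G.Desc m n` : `n` is a descendant of `m`, i.e. there is a directed path from `m` to `n`. -/
def Desc (G : Episode) (m n : ℕ) : Prop := Relation.TransGen G.edge m n

/-- `G.PDesc m n` : `n` is a proper descendant of `m`, i.e. some directed path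
from `m` to `n` contains a proper edge. -/
def PDesc (G : Episode) (m n : ℕ) : Prop :=
  ∃ a b, Relation.ReflTransGen G.edge m a ∧ G.proper a b ∧ Relation.ReflTransGen G.edge b n

/-- Well-formedness of an episode: events map into the nodes, every node carries an
event, edges run between nodes, the weak and proper edges are disjoint, and the
graph is acyclic (a DAG). -/
structure WellFormed (G : Episode) : Prop where
  node_mem : ∀ e ∈ G.events, G.node e ∈ G.nodes
  node_surj : ∀ n ∈ G.nodes, ∃ e ∈ G.events, G.node e = n
  weak_mem : ∀ a b, G.weak a b → a ∈ G.nodes ∧ b ∈ G.nodes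
  proper_mem : ∀ a b, G.proper a b → a ∈ G.nodes ∧ b ∈ G.nodes
  weak_proper_disjoint : ∀ a b, G.weak a b → G.proper a b → False
  acyclic : ∀ n, ¬ G.Desc n n

/-- The transitive closure of an episode: add an edge from every node to each of its
descendants, proper if the descendant is a proper descendant, weak otherwise. -/
def tcl (G : Episode) : Episode :=
  { G with
    proper := fun a b => G.PDesc a b
    weak := fun a b => G.Desc a b ∧ ¬ G.PDesc a b }

/-- An episode is transitively closed if it coincides with its transitive closure. -/
def TransClosed (G : Episode) : Prop :=
  (∀ a b, G.proper a b ↔ G.PDesc a b) ∧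
  (∀ a b, G.weak a b ↔ (G.Desc a b ∧ ¬ G.PDesc a b))

end Episode

/-- `m` is a coverage mapping of episode `G` into sequence `s`: an injective map from
the episode events into the sequence events preserving labels, mapping events of one
node to a common time stamp, and respecting weak and proper edges. -/
def IsCoverMap (s : EventSeq) (G : Episode) (m : ℕ → SeqEvent) : Prop :=
  (∀ e ∈ G.events, m e ∈ s.events) ∧
  Set.InjOn m ↑G.events ∧
  (∀ e ∈ G.events, (m e).lab = G.lab e) ∧
  (∀ e ∈ G.events, ∀ f ∈ G.events, G.node e = G.node f → (m e).ts = (m f).ts) ∧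
  (∀ e ∈ G.events, ∀ f ∈ G.events, G.Desc (G.node f) (G.node e) → (m f).ts ≤ (m e).ts) ∧
  (∀ e ∈ G.events, ∀ f ∈ G.events, G.PDesc (G.node f) (G.node e) → (m f).ts < (m e).ts)

/-- A sequence `s` covers an episode `G`. -/
def Covers (s : EventSeq) (G : Episode) : Prop := ∃ m, IsCoverMap s G m

/-- `G ⪯ H` : every sequence covering `H` also covers `G`. -/
def Subepisode (G H : Episode) : Prop := ∀ s : EventSeq, Covers s H → Covers s G

/-- `G ∼ H` : `G ⪯ H` and `H ⪯ G`. -/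
def EpisodeSimilar (G H : Episode) : Prop := Subepisode G H ∧ Subepisode H G

/-- The window `s[i, j]`: the subsequence of events with time stamps in `[i, j]`. -/
def EventSeq.window (s : EventSeq) (i j : ℤ) : EventSeq where
  events := s.events.filter (fun e => i ≤ e.ts ∧ e.ts ≤ j)
  id_inj := fun e he f hf h =>
    s.id_inj e (Finset.mem_filter.mp he).1 f (Finset.mem_filter.mp hf).1 h
  ts_mono := fun e he f hf h =>
    s.ts_mono e (Finset.mem_filter.mp he).1 f (Finset.mem_filter.mp hf).1 h

/-- The support `fr(G; s)` with window size `ρ`: the number of integers `t` such that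
the window `s[t, t + ρ - 1]` covers `G` (as an extended natural number). -/
noncomputable def support (ρ : ℤ) (s : EventSeq) (G : Episode) : ℕ∞ :=
  {t : ℤ | Covers (s.window t (t + ρ - 1)) G}.encard

/-- `first(i)` : the smallest time stamp in the range of the instance. -/
noncomputable def instFirst (G : Episode) (m : ℕ → SeqEvent) : ℤ :=
  sInf ((fun e => (m e).ts) '' ↑G.events)

/-- `last(i)` : the largest time stamp in the range of the instance. -/
noncomputable def instLast (G : Episode) (m : ℕ → SeqEvent) : ℤ :=
  sSup ((fun e => (m e).ts) '' ↑G.events)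

/-- `m` is an instance of `G` in `s` (with window size `ρ`): a coverage mapping of `G`
into `s` such that no used sequence event can be replaced by an unused one with the same
label, the same time stamp and a smaller id, and whose span is less than `ρ`. -/
def IsInstance (ρ : ℤ) (s : EventSeq) (G : Episode) (m : ℕ → SeqEvent) : Prop :=
  IsCoverMap s G m ∧
  (∀ e ∈ G.events, ∀ f ∈ s.events, (∀ e' ∈ G.events, m e' ≠ f) →
      f.lab = (m e).lab → f.ts = (m e).ts → ¬ f.id < (m e).id) ∧
  instLast G m - instFirst G m ≤ ρ - 1

/-- Labels of the sequence `a b c b d a c b c d` (a = 0, b = 1, c = 2, d = 3),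
positions 1, …, 10. -/
def lab16 : ℕ → ℕ
  | 1 => 0 | 2 => 1 | 3 => 2 | 4 => 1 | 5 => 3
  | 6 => 0 | 7 => 2 | 8 => 1 | 9 => 2 | 10 => 3
  | _ => 0

/-- The sequence of ten events with time stamps 1, …, 10 and labels
`a b c b d a c b c d`. -/
def seq16 : EventSeq where
  events := (Finset.Icc 1 10).image (fun t => ⟨t, lab16 t, (t : ℤ)⟩)
  id_inj := by
    intro e he f hf h
    simp only [Finset.mem_image] at he hf
    obtain ⟨t, _, rfl⟩ := he
    obtain ⟨u, _, rfl⟩ := hf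
    simp only [SeqEvent.mk.injEq] at h ⊢
    simp_all
  ts_mono := by
    intro e he f hf h
    simp only [Finset.mem_image] at he hf
    obtain ⟨t, _, rfl⟩ := he
    obtain ⟨u, _, rfl⟩ := hf
    simp only [] at h ⊢
    exact_mod_cast h

/-- Episode `G1`: four nodes labelled `a, b, c, d` (each carrying one event), with a
single proper edge from the `a`-node to the `d`-node. -/
def G1ep : Episode where
  events := {0, 1, 2, 3}
  lab := id
  nodes := {0, 1, 2, 3}
  node := id
  weak := fun _ _ => False
  proper := fun x y => x = 0 ∧ y = 3

/-- Episode `G3`: the transitively closed serial episode `a → b → c → d`. -/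
def G3ep : Episode where
  events := {0, 1, 2, 3}
  lab := id
  nodes := {0, 1, 2, 3}
  node := id
  weak := fun _ _ => False
  proper := fun x y => x < y ∧ y ≤ 3

/-- The rank of the nodes in the serial order `a, c, b, d`. -/
def rank4 : ℕ → ℕ
  | 0 => 0 | 1 => 2 | 2 => 1 | 3 => 3 | _ => 4

/-- Episode `G4`: the transitively closed serial episode `a → c → b → d`. -/
def G4ep : Episode where
  events := {0, 1, 2, 3}
  lab := id
  nodes := {0, 1, 2, 3}
  node := id
  weak := fun _ _ => False
  proper := fun x y => x ≤ 3 ∧ y ≤ 3 ∧ rank4 x < rank4 y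

/-! ### Auxiliary lemmas -/

section Aux

-- Edge characterizations
lemma G1_edge {a b : ℕ} (h : G1ep.edge a b) : a = 0 ∧ b = 3 := by
  rcases h with h | h
  · exact h.elim
  · exact h

lemma G1_desc {a b : ℕ} (h : G1ep.Desc a b) : a = 0 ∧ b = 3 := by
  induction h with
  | single h => exact G1_edge h
  | tail _ h ih => have := G1_edge h; omega

lemma G1_rtg {a b : ℕ} (h : Relation.ReflTransGen G1ep.edge a b) :
    a = b ∨ (a = 0 ∧ b = 3) := by
  rcases Relation.reflTransGen_iff_eq_or_transGen.mp h with h | h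
  · exact Or.inl h.symm
  · exact Or.inr (G1_desc h)

lemma G1_pdesc {a b : ℕ} (h : G1ep.PDesc a b) : a = 0 ∧ b = 3 := by
  obtain ⟨x, y, h1, h2, h3⟩ := h
  obtain ⟨hx, hy⟩ : x = 0 ∧ y = 3 := h2
  rcases G1_rtg h1 with h1 | h1 <;> rcases G1_rtg h3 with h3 | h3 <;> omega

lemma G1_pdesc_03 : G1ep.PDesc 0 3 :=
  ⟨0, 3, Relation.ReflTransGen.refl, ⟨rfl, rfl⟩, Relation.ReflTransGen.refl⟩

lemma G3_edge {a b : ℕ} (h : G3ep.edge a b) : a < b ∧ b ≤ 3 := by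
  rcases h with h | h
  · exact h.elim
  · exact h

lemma G3_desc {a b : ℕ} (h : G3ep.Desc a b) : a < b ∧ b ≤ 3 := by
  induction h with
  | single h => exact G3_edge h
  | tail _ h ih => have := G3_edge h; omega

lemma G3_rtg {a b : ℕ} (h : Relation.ReflTransGen G3ep.edge a b) : a ≤ b := by
  rcases Relation.reflTransGen_iff_eq_or_transGen.mp h with h | h
  · omega
  · have := G3_desc h; omega

lemma G3_pdesc {a b : ℕ} (h : G3ep.PDesc a b) : a < b ∧ b ≤ 3 := by
  obtain ⟨x, y, h1, h2, h3⟩ := h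
  obtain ⟨hx, hy⟩ : x < y ∧ y ≤ 3 := h2
  have h1' := G3_rtg h1
  have h3' := G3_rtg h3
  rcases Relation.reflTransGen_iff_eq_or_transGen.mp h3 with h3 | h3
  · omega
  · have := G3_desc h3; omega

lemma G3_pdesc_of {a b : ℕ} (h1 : a < b) (h2 : b ≤ 3) : G3ep.PDesc a b :=
  ⟨a, b, Relation.ReflTransGen.refl, ⟨h1, h2⟩, Relation.ReflTransGen.refl⟩

lemma G4_edge {a b : ℕ} (h : G4ep.edge a b) : a ≤ 3 ∧ b ≤ 3 ∧ rank4 a < rank4 b := by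
  rcases h with h | h
  · exact h.elim
  · exact h

lemma G4_desc {a b : ℕ} (h : G4ep.Desc a b) : a ≤ 3 ∧ b ≤ 3 ∧ rank4 a < rank4 b := by
  induction h with
  | single h => exact G4_edge h
  | tail _ h ih => have := G4_edge h; omega

lemma G4_pdesc {a b : ℕ} (h : G4ep.PDesc a b) : a ≤ 3 ∧ b ≤ 3 ∧ rank4 a < rank4 b := by
  obtain ⟨x, y, h1, h2, h3⟩ := h
  obtain ⟨hx, hy, hxy⟩ : x ≤ 3 ∧ y ≤ 3 ∧ rank4 x < rank4 y := h2
  rcases Relation.reflTransGen_iff_eq_or_transGen.mp h1 with h1 | h1 <;>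
    rcases Relation.reflTransGen_iff_eq_or_transGen.mp h3 with h3 | h3
  · subst h1; subst h3; omega
  · subst h1; have := G4_desc h3; omega
  · subst h3; have := G4_desc h1; omega
  · have := G4_desc h1; have := G4_desc h3; omega

lemma G4_pdesc_of {a b : ℕ} (h1 : a ≤ 3) (h2 : b ≤ 3) (h3 : rank4 a < rank4 b) :
    G4ep.PDesc a b :=
  ⟨a, b, Relation.ReflTransGen.refl, ⟨h1, h2, h3⟩, Relation.ReflTransGen.refl⟩

/-- The map sending episode events `0,1,2,3` to the four given sequence events. -/
def quadMap (w x y z : SeqEvent) : ℕ → SeqEvent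
  | 0 => w | 1 => x | 2 => y | _ => z

lemma covers_G1 {s : EventSeq} {w x y z : SeqEvent}
    (hw : w ∈ s.events) (hx : x ∈ s.events) (hy : y ∈ s.events) (hz : z ∈ s.events)
    (l0 : w.lab = 0) (l1 : x.lab = 1) (l2 : y.lab = 2) (l3 : z.lab = 3)
    (h03 : w.ts < z.ts) : Covers s G1ep := by
  refine ⟨quadMap w x y z, ?_, ?_, ?_, ?_, ?_, ?_⟩
  · intro e he
    have he' : e = 0 ∨ e = 1 ∨ e = 2 ∨ e = 3 := by
      simpa [G1ep] using he
    rcases he' with rfl | rfl | rfl | rfl <;> simpa [quadMap]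
  · intro e he f hf hmf
    have he' : e = 0 ∨ e = 1 ∨ e = 2 ∨ e = 3 := by simpa [G1ep] using he
    have hf' : f = 0 ∨ f = 1 ∨ f = 2 ∨ f = 3 := by simpa [G1ep] using hf
    rcases he' with rfl | rfl | rfl | rfl <;> rcases hf' with rfl | rfl | rfl | rfl <;>
      simp only [quadMap] at hmf <;> first | rfl | (subst hmf; omega)
  · intro e he
    have he' : e = 0 ∨ e = 1 ∨ e = 2 ∨ e = 3 := by simpa [G1ep] using he
    rcases he' with rfl | rfl | rfl | rfl <;> simpa [quadMap, G1ep]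
  · intro e _ f _ h
    have : e = f := h
    subst this; rfl
  · intro e he f hf hd
    obtain ⟨h1, h2⟩ := G1_desc hd
    have hf0 : f = 0 := h1
    have he3 : e = 3 := h2
    subst hf0; subst he3
    simpa [quadMap] using h03.le
  · intro e he f hf hd
    obtain ⟨h1, h2⟩ := G1_pdesc hd
    have hf0 : f = 0 := h1
    have he3 : e = 3 := h2
    subst hf0; subst he3
    simpa [quadMap] using h03

lemma covers_G3 {s : EventSeq} {w x y z : SeqEvent}
    (hw : w ∈ s.events) (hx : x ∈ s.events) (hy : y ∈ s.events) (hz : z ∈ s.events)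
    (l0 : w.lab = 0) (l1 : x.lab = 1) (l2 : y.lab = 2) (l3 : z.lab = 3)
    (h01 : w.ts < x.ts) (h12 : x.ts < y.ts) (h23 : y.ts < z.ts) : Covers s G3ep := by
  refine ⟨quadMap w x y z, ?_, ?_, ?_, ?_, ?_, ?_⟩
  · intro e he
    have he' : e = 0 ∨ e = 1 ∨ e = 2 ∨ e = 3 := by simpa [G3ep] using he
    rcases he' with rfl | rfl | rfl | rfl <;> simpa [quadMap]
  · intro e he f hf hmf
    have he' : e = 0 ∨ e = 1 ∨ e = 2 ∨ e = 3 := by simpa [G3ep] using he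
    have hf' : f = 0 ∨ f = 1 ∨ f = 2 ∨ f = 3 := by simpa [G3ep] using hf
    rcases he' with rfl | rfl | rfl | rfl <;> rcases hf' with rfl | rfl | rfl | rfl <;>
      simp only [quadMap] at hmf <;> first | rfl | (subst hmf; omega)
  · intro e he
    have he' : e = 0 ∨ e = 1 ∨ e = 2 ∨ e = 3 := by simpa [G3ep] using he
    rcases he' with rfl | rfl | rfl | rfl <;> simpa [quadMap, G3ep]
  · intro e _ f _ h
    have : e = f := h
    subst this; rfl
  · intro e he f hf hd
    obtain ⟨h1, h2⟩ := G3_desc hd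
    have he' : e = 0 ∨ e = 1 ∨ e = 2 ∨ e = 3 := by simpa [G3ep] using he
    have hf' : f = 0 ∨ f = 1 ∨ f = 2 ∨ f = 3 := by simpa [G3ep] using hf
    have h1' : f < e := h1
    rcases he' with rfl | rfl | rfl | rfl <;> rcases hf' with rfl | rfl | rfl | rfl <;>
      simp only [quadMap] <;> omega
  · intro e he f hf hd
    obtain ⟨h1, h2⟩ := G3_pdesc hd
    have he' : e = 0 ∨ e = 1 ∨ e = 2 ∨ e = 3 := by simpa [G3ep] using he
    have hf' : f = 0 ∨ f = 1 ∨ f = 2 ∨ f = 3 := by simpa [G3ep] using hf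
    have h1' : f < e := h1
    rcases he' with rfl | rfl | rfl | rfl <;> rcases hf' with rfl | rfl | rfl | rfl <;>
      simp only [quadMap] <;> omega

lemma covers_G4 {s : EventSeq} {w x y z : SeqEvent}
    (hw : w ∈ s.events) (hx : x ∈ s.events) (hy : y ∈ s.events) (hz : z ∈ s.events)
    (l0 : w.lab = 0) (l1 : x.lab = 1) (l2 : y.lab = 2) (l3 : z.lab = 3)
    (h02 : w.ts < y.ts) (h21 : y.ts < x.ts) (h13 : x.ts < z.ts) : Covers s G4ep := by
  refine ⟨quadMap w x y z, ?_, ?_, ?_, ?_, ?_, ?_⟩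
  · intro e he
    have he' : e = 0 ∨ e = 1 ∨ e = 2 ∨ e = 3 := by simpa [G4ep] using he
    rcases he' with rfl | rfl | rfl | rfl <;> simpa [quadMap]
  · intro e he f hf hmf
    have he' : e = 0 ∨ e = 1 ∨ e = 2 ∨ e = 3 := by simpa [G4ep] using he
    have hf' : f = 0 ∨ f = 1 ∨ f = 2 ∨ f = 3 := by simpa [G4ep] using hf
    rcases he' with rfl | rfl | rfl | rfl <;> rcases hf' with rfl | rfl | rfl | rfl <;>
      simp only [quadMap] at hmf <;> first | rfl | (subst hmf; omega)
  · intro e he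
    have he' : e = 0 ∨ e = 1 ∨ e = 2 ∨ e = 3 := by simpa [G4ep] using he
    rcases he' with rfl | rfl | rfl | rfl <;> simpa [quadMap, G4ep]
  · intro e _ f _ h
    have : e = f := h
    subst this; rfl
  · intro e he f hf hd
    obtain ⟨h1, h2, h3⟩ := G4_desc hd
    have he' : e = 0 ∨ e = 1 ∨ e = 2 ∨ e = 3 := by simpa [G4ep] using he
    have hf' : f = 0 ∨ f = 1 ∨ f = 2 ∨ f = 3 := by simpa [G4ep] using hf
    have h3' : rank4 f < rank4 e := h3
    rcases he' with rfl | rfl | rfl | rfl <;> rcases hf' with rfl | rfl | rfl | rfl <;>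
      simp only [quadMap] <;> simp only [rank4] at h3' <;> omega
  · intro e he f hf hd
    obtain ⟨h1, h2, h3⟩ := G4_pdesc hd
    have he' : e = 0 ∨ e = 1 ∨ e = 2 ∨ e = 3 := by simpa [G4ep] using he
    have hf' : f = 0 ∨ f = 1 ∨ f = 2 ∨ f = 3 := by simpa [G4ep] using hf
    have h3' : rank4 f < rank4 e := h3
    rcases he' with rfl | rfl | rfl | rfl <;> rcases hf' with rfl | rfl | rfl | rfl <;>
      simp only [quadMap] <;> simp only [rank4] at h3' <;> omega

/-- Membership in `seq16`. -/
lemma mem_seq16_iff {e : SeqEvent} :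
    e ∈ seq16.events ↔ ∃ u : ℕ, 1 ≤ u ∧ u ≤ 10 ∧ e = ⟨u, lab16 u, (u : ℤ)⟩ := by
  simp only [seq16, Finset.mem_image, Finset.mem_Icc]
  constructor
  · rintro ⟨u, ⟨h1, h2⟩, rfl⟩; exact ⟨u, h1, h2, rfl⟩
  · rintro ⟨u, h1, h2, rfl⟩; exact ⟨u, ⟨h1, h2⟩, rfl⟩

lemma mem_window_iff {s : EventSeq} {e : SeqEvent} {i j : ℤ} :
    e ∈ (s.window i j).events ↔ e ∈ s.events ∧ i ≤ e.ts ∧ e.ts ≤ j := by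
  simp [EventSeq.window, Finset.mem_filter, and_assoc]

lemma mem_seq16_window {u : ℕ} {i j : ℤ} (h1 : 1 ≤ u) (h2 : u ≤ 10)
    (h3 : i ≤ (u : ℤ)) (h4 : (u : ℤ) ≤ j) :
    (⟨u, lab16 u, (u : ℤ)⟩ : SeqEvent) ∈ (seq16.window i j).events :=
  mem_window_iff.mpr ⟨mem_seq16_iff.mpr ⟨u, h1, h2, rfl⟩, h3, h4⟩

lemma lab16_zero {u : ℕ} (h1 : 1 ≤ u) (h2 : u ≤ 10) (h : lab16 u = 0) :
    u = 1 ∨ u = 6 := by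
  interval_cases u <;> simp_all [lab16]

lemma lab16_three {u : ℕ} (h1 : 1 ≤ u) (h2 : u ≤ 10) (h : lab16 u = 3) :
    u = 5 ∨ u = 10 := by
  interval_cases u <;> simp_all [lab16]

/-- If a sequence covering `G` maps events `0` and `3` (with labels `0` and `3`)
into a window of `seq16`, the window start is `1` or `6`. -/
lemma window_start (G : Episode) (hev : G.events = ({0, 1, 2, 3} : Finset ℕ))
    (hlab : G.lab = id) (hnode : G.node = id) (hpd : G.PDesc 0 3) {t : ℤ}
    (h : Covers (seq16.window t (t + 5 - 1)) G) : t = 1 ∨ t = 6 := by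
  obtain ⟨m, h1, _, h3, _, _, h6⟩ := h
  have h0mem : (0 : ℕ) ∈ G.events := by rw [hev]; decide
  have h3mem : (3 : ℕ) ∈ G.events := by rw [hev]; decide
  have hm0 := mem_window_iff.mp (h1 0 h0mem)
  have hm3 := mem_window_iff.mp (h1 3 h3mem)
  have hl0 : (m 0).lab = 0 := by rw [h3 0 h0mem, hlab]; rfl
  have hl3 : (m 3).lab = 3 := by rw [h3 3 h3mem, hlab]; rfl
  obtain ⟨u, hu1, hu2, hu3⟩ := mem_seq16_iff.mp hm0.1
  obtain ⟨v, hv1, hv2, hv3⟩ := mem_seq16_iff.mp hm3.1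
  have hts0 : (m 0).ts = (u : ℤ) := by rw [hu3]
  have hts3 : (m 3).ts = (v : ℤ) := by rw [hv3]
  have hlu : lab16 u = 0 := by rw [hu3] at hl0; exact hl0
  have hlv : lab16 v = 3 := by rw [hv3] at hl3; exact hl3
  have hu : u = 1 ∨ u = 6 := lab16_zero hu1 hu2 hlu
  have hv : v = 5 ∨ v = 10 := lab16_three hv1 hv2 hlv
  have hlt : (m 0).ts < (m 3).ts := by
    have := h6 3 h3mem 0 h0mem
    rw [hnode] at this
    exact this hpd
  have hb0 := hm0.2
  have hb3 := hm3.2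
  rw [hts0] at hb0 hlt
  rw [hts3] at hb3 hlt
  rcases hu with rfl | rfl <;> rcases hv with rfl | rfl <;> omega

/-- The sequence `a b c d`. -/
def seqABCD : EventSeq where
  events := {⟨1, 0, 1⟩, ⟨2, 1, 2⟩, ⟨3, 2, 3⟩, ⟨4, 3, 4⟩}
  id_inj := by decide
  ts_mono := by decide

/-- The sequence `a c b d`. -/
def seqACBD : EventSeq where
  events := {⟨1, 0, 1⟩, ⟨2, 2, 2⟩, ⟨3, 1, 3⟩, ⟨4, 3, 4⟩}
  id_inj := by decide
  ts_mono := by decide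

lemma not_covers_ABCD_G4 : ¬ Covers seqABCD G4ep := by
  rintro ⟨m, h1, _, h3, _, _, h6⟩
  have h1mem : (1 : ℕ) ∈ G4ep.events := by decide
  have h2mem : (2 : ℕ) ∈ G4ep.events := by decide
  have hm1 := h1 1 h1mem
  have hm2 := h1 2 h2mem
  have hl1 : (m 1).lab = 1 := h3 1 h1mem
  have hl2 : (m 2).lab = 2 := h3 2 h2mem
  have e1 : m 1 = ⟨2, 1, 2⟩ := by
    simp only [seqABCD, Finset.mem_insert, Finset.mem_singleton] at hm1
    rcases hm1 with h | h | h | h <;> rw [h] at hl1 ⊢ <;> simp_all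
  have e2 : m 2 = ⟨3, 2, 3⟩ := by
    simp only [seqABCD, Finset.mem_insert, Finset.mem_singleton] at hm2
    rcases hm2 with h | h | h | h <;> rw [h] at hl2 ⊢ <;> simp_all
  have := h6 1 h1mem 2 h2mem (G4_pdesc_of (by decide) (by decide) (by decide))
  rw [e1, e2] at this
  norm_num at this

lemma not_covers_ACBD_G3 : ¬ Covers seqACBD G3ep := by
  rintro ⟨m, h1, _, h3, _, _, h6⟩
  have h1mem : (1 : ℕ) ∈ G3ep.events := by decide
  have h2mem : (2 : ℕ) ∈ G3ep.events := by decide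
  have hm1 := h1 1 h1mem
  have hm2 := h1 2 h2mem
  have hl1 : (m 1).lab = 1 := h3 1 h1mem
  have hl2 : (m 2).lab = 2 := h3 2 h2mem
  have e1 : m 1 = ⟨3, 1, 3⟩ := by
    simp only [seqACBD, Finset.mem_insert, Finset.mem_singleton] at hm1
    rcases hm1 with h | h | h | h <;> rw [h] at hl1 ⊢ <;> simp_all
  have e2 : m 2 = ⟨2, 2, 2⟩ := by
    simp only [seqACBD, Finset.mem_insert, Finset.mem_singleton] at hm2
    rcases hm2 with h | h | h | h <;> rw [h] at hl2 ⊢ <;> simp_all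
  have := h6 2 h2mem 1 h1mem (G3_pdesc_of (by decide) (by decide))
  rw [e1, e2] at this
  norm_num at this

lemma memABCD (e : SeqEvent)
    (h : e = (⟨1, 0, 1⟩ : SeqEvent) ∨ e = ⟨2, 1, 2⟩ ∨ e = ⟨3, 2, 3⟩ ∨ e = ⟨4, 3, 4⟩) :
    e ∈ seqABCD.events := by
  rcases h with rfl | rfl | rfl | rfl <;> decide

lemma memACBD (e : SeqEvent)
    (h : e = (⟨1, 0, 1⟩ : SeqEvent) ∨ e = ⟨2, 2, 2⟩ ∨ e = ⟨3, 1, 3⟩ ∨ e = ⟨4, 3, 4⟩) :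
    e ∈ seqACBD.events := by
  rcases h with rfl | rfl | rfl | rfl <;> decide

lemma coverSet_eq (G : Episode) (hev : G.events = ({0, 1, 2, 3} : Finset ℕ))
    (hlab : G.lab = id) (hnode : G.node = id) (hpd : G.PDesc 0 3)
    (hc1 : Covers (seq16.window 1 (1 + 5 - 1)) G)
    (hc6 : Covers (seq16.window 6 (6 + 5 - 1)) G) :
    {t : ℤ | Covers (seq16.window t (t + 5 - 1)) G} = {1, 6} := by
  ext t
  simp only [Set.mem_setOf_eq, Set.mem_insert_iff, Set.mem_singleton_iff]
  constructor
  · exact window_start G hev hlab hnode hpd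
  · rintro (rfl | rfl)
    · exact hc1
    · exact hc6

end Aux

/-- with window size `ρ = 5` on the sequence `a b c b d a c b c d`,
`fr(G1) = fr(G3) = fr(G4) = 2`, `G1 ⪯ G3`, `G1 ⪯ G4`, `G3 ⋠ G1`, `G4 ⋠ G1`,
`G3 ⋠ G4` and `G4 ⋠ G3`: an episode may have two incomparable strict superepisodes
with the same support, so no frequency-based closure operator exists. -/
theorem no_frequency_closure :
    support 5 seq16 G1ep = 2 ∧ support 5 seq16 G3ep = 2 ∧ support 5 seq16 G4ep = 2 ∧
    Subepisode G1ep G3ep ∧ Subepisode G1ep G4ep ∧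
    ¬ Subepisode G3ep G1ep ∧ ¬ Subepisode G4ep G1ep ∧
    ¬ Subepisode G3ep G4ep ∧ ¬ Subepisode G4ep G3ep := by
  have mw : ∀ u : ℕ, ∀ i j : ℤ, 1 ≤ u → u ≤ 10 → i ≤ (u : ℤ) → (u : ℤ) ≤ j →
      (⟨u, lab16 u, (u : ℤ)⟩ : SeqEvent) ∈ (seq16.window i j).events :=
    fun u i j h1 h2 h3 h4 => mem_seq16_window h1 h2 h3 h4
  -- covers of the two windows
  have c11 : Covers (seq16.window 1 (1 + 5 - 1)) G1ep :=
    covers_G1 (mw 1 _ _ (by norm_num) (by norm_num) (by norm_num) (by norm_num))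
      (mw 2 _ _ (by norm_num) (by norm_num) (by norm_num) (by norm_num))
      (mw 3 _ _ (by norm_num) (by norm_num) (by norm_num) (by norm_num))
      (mw 5 _ _ (by norm_num) (by norm_num) (by norm_num) (by norm_num))
      (by decide) (by decide) (by decide) (by decide) (by norm_num)
  have c16 : Covers (seq16.window 6 (6 + 5 - 1)) G1ep :=
    covers_G1 (mw 6 _ _ (by norm_num) (by norm_num) (by norm_num) (by norm_num))
      (mw 8 _ _ (by norm_num) (by norm_num) (by norm_num) (by norm_num))
      (mw 9 _ _ (by norm_num) (by norm_num) (by norm_num) (by norm_num))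
      (mw 10 _ _ (by norm_num) (by norm_num) (by norm_num) (by norm_num))
      (by decide) (by decide) (by decide) (by decide) (by norm_num)
  have c31 : Covers (seq16.window 1 (1 + 5 - 1)) G3ep :=
    covers_G3 (mw 1 _ _ (by norm_num) (by norm_num) (by norm_num) (by norm_num))
      (mw 2 _ _ (by norm_num) (by norm_num) (by norm_num) (by norm_num))
      (mw 3 _ _ (by norm_num) (by norm_num) (by norm_num) (by norm_num))
      (mw 5 _ _ (by norm_num) (by norm_num) (by norm_num) (by norm_num))
      (by decide) (by decide) (by decide) (by decide)
      (by norm_num) (by norm_num) (by norm_num)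
  have c36 : Covers (seq16.window 6 (6 + 5 - 1)) G3ep :=
    covers_G3 (mw 6 _ _ (by norm_num) (by norm_num) (by norm_num) (by norm_num))
      (mw 8 _ _ (by norm_num) (by norm_num) (by norm_num) (by norm_num))
      (mw 9 _ _ (by norm_num) (by norm_num) (by norm_num) (by norm_num))
      (mw 10 _ _ (by norm_num) (by norm_num) (by norm_num) (by norm_num))
      (by decide) (by decide) (by decide) (by decide)
      (by norm_num) (by norm_num) (by norm_num)
  have c41 : Covers (seq16.window 1 (1 + 5 - 1)) G4ep :=
    covers_G4 (mw 1 _ _ (by norm_num) (by norm_num) (by norm_num) (by norm_num))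
      (mw 4 _ _ (by norm_num) (by norm_num) (by norm_num) (by norm_num))
      (mw 3 _ _ (by norm_num) (by norm_num) (by norm_num) (by norm_num))
      (mw 5 _ _ (by norm_num) (by norm_num) (by norm_num) (by norm_num))
      (by decide) (by decide) (by decide) (by decide)
      (by norm_num) (by norm_num) (by norm_num)
  have c46 : Covers (seq16.window 6 (6 + 5 - 1)) G4ep :=
    covers_G4 (mw 6 _ _ (by norm_num) (by norm_num) (by norm_num) (by norm_num))
      (mw 8 _ _ (by norm_num) (by norm_num) (by norm_num) (by norm_num))
      (mw 7 _ _ (by norm_num) (by norm_num) (by norm_num) (by norm_num))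
      (mw 10 _ _ (by norm_num) (by norm_num) (by norm_num) (by norm_num))
      (by decide) (by decide) (by decide) (by decide)
      (by norm_num) (by norm_num) (by norm_num)
  have hs1 : support 5 seq16 G1ep = 2 := by
    rw [support, coverSet_eq G1ep rfl rfl rfl G1_pdesc_03 c11 c16]
    exact Set.encard_pair (by norm_num)
  have hs3 : support 5 seq16 G3ep = 2 := by
    rw [support, coverSet_eq G3ep rfl rfl rfl
      (G3_pdesc_of (by decide) (by decide)) c31 c36]
    exact Set.encard_pair (by norm_num)
  have hs4 : support 5 seq16 G4ep = 2 := by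
    rw [support, coverSet_eq G4ep rfl rfl rfl
      (G4_pdesc_of (by decide) (by decide) (by decide)) c41 c46]
    exact Set.encard_pair (by norm_num)
  have sub13 : Subepisode G1ep G3ep := by
    rintro s ⟨m, h1, h2, h3, h4, h5, h6⟩
    refine ⟨m, h1, h2, h3, h4, ?_, ?_⟩
    · intro e he f hf hd
      have hf0 : f = 0 := (G1_desc hd).1
      have he3 : e = 3 := (G1_desc hd).2
      subst hf0; subst he3
      exact (h6 3 he 0 hf (G3_pdesc_of (by decide) (by decide))).le
    · intro e he f hf hd
      have hf0 : f = 0 := (G1_pdesc hd).1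
      have he3 : e = 3 := (G1_pdesc hd).2
      subst hf0; subst he3
      exact h6 3 he 0 hf (G3_pdesc_of (by decide) (by decide))
  have sub14 : Subepisode G1ep G4ep := by
    rintro s ⟨m, h1, h2, h3, h4, h5, h6⟩
    refine ⟨m, h1, h2, h3, h4, ?_, ?_⟩
    · intro e he f hf hd
      have hf0 : f = 0 := (G1_desc hd).1
      have he3 : e = 3 := (G1_desc hd).2
      subst hf0; subst he3
      exact (h6 3 he 0 hf (G4_pdesc_of (by decide) (by decide) (by decide))).le
    · intro e he f hf hd
      have hf0 : f = 0 := (G1_pdesc hd).1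
      have he3 : e = 3 := (G1_pdesc hd).2
      subst hf0; subst he3
      exact h6 3 he 0 hf (G4_pdesc_of (by decide) (by decide) (by decide))
  -- small covers
  have cABCD_G1 : Covers seqABCD G1ep :=
    covers_G1 (w := ⟨1, 0, 1⟩) (x := ⟨2, 1, 2⟩) (y := ⟨3, 2, 3⟩) (z := ⟨4, 3, 4⟩)
      (by decide) (by decide) (by decide) (by decide) rfl rfl rfl rfl (by norm_num)
  have cABCD_G3 : Covers seqABCD G3ep :=
    covers_G3 (w := ⟨1, 0, 1⟩) (x := ⟨2, 1, 2⟩) (y := ⟨3, 2, 3⟩) (z := ⟨4, 3, 4⟩)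
      (by decide) (by decide) (by decide) (by decide) rfl rfl rfl rfl
      (by norm_num) (by norm_num) (by norm_num)
  have cACBD_G1 : Covers seqACBD G1ep :=
    covers_G1 (w := ⟨1, 0, 1⟩) (x := ⟨3, 1, 3⟩) (y := ⟨2, 2, 2⟩) (z := ⟨4, 3, 4⟩)
      (by decide) (by decide) (by decide) (by decide) rfl rfl rfl rfl (by norm_num)
  have cACBD_G4 : Covers seqACBD G4ep :=
    covers_G4 (w := ⟨1, 0, 1⟩) (x := ⟨3, 1, 3⟩) (y := ⟨2, 2, 2⟩) (z := ⟨4, 3, 4⟩)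
      (by decide) (by decide) (by decide) (by decide) rfl rfl rfl rfl
      (by norm_num) (by norm_num) (by norm_num)
  refine ⟨hs1, hs3, hs4, sub13, sub14, ?_, ?_, ?_, ?_⟩
  · intro h; exact not_covers_ACBD_G3 (h seqACBD cACBD_G1)
  · intro h; exact not_covers_ABCD_G4 (h seqABCD cABCD_G1)
  · intro h; exact not_covers_ACBD_G3 (h seqACBD cACBD_G4)
  · intro h; exact not_covers_ABCD_G4 (h seqABCD cABCD_G3)
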